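/- Let X : Ω → ℝⁿ be a square-integrable random vector with second moment matrix Γ_X = E[X Xᵀ]. Let u₁, …, uₙ be an orthonormal basis of ℝⁿ consisting of eigenvectors of Γ_X with eigenvalues λ₁ ≥ λ₂ ≥ ⋯ ≥ λₙ ≥ 0, and for r ≤ n let P = Σ_{i=1}^{r} uᵢ uᵢᵀ be the orthogonal projection onto the span of the first r eigenvectors. Then rank(P) ≤ r and for every A ∈ ℝ^{n×n} with rank(A) ≤ r, E‖P X − X‖₂² ≤ E‖A X − X‖₂². -/

import Mathlib

open Matrix MeasureTheory
open scoped ENNReal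

/-- Second (cross-)moment matrix `E[X Yᵀ]` of two random vectors. -/
noncomputable def secondMoment {Ω : Type} [MeasurableSpace Ω] (μ : Measure Ω)
    {n m : ℕ} (X : Ω → Fin n → ℝ) (Y : Ω → Fin m → ℝ) : Matrix (Fin n) (Fin m) ℝ :=
  Matrix.of fun i j => ∫ ω, X ω i * Y ω j ∂μ

section Aux

open Finset in
private lemma abel_nonneg (n : ℕ) (a e : ℕ → ℝ)
    (hmono : ∀ i j, i ≤ j → j < n → a j ≤ a i)
    (h0 : ∀ i, i < n → 0 ≤ a i)
    (hps : ∀ k, k ≤ n → 0 ≤ ∑ i ∈ range k, e i) :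
    0 ≤ ∑ i ∈ range n, a i * e i := by
  rcases Nat.eq_zero_or_pos n with h | h
  · simp [h]
  have H := Finset.sum_range_by_parts a e n
  simp only [smul_eq_mul] at H
  have h1 : 0 ≤ a (n - 1) * ∑ i ∈ range n, e i :=
    mul_nonneg (h0 _ (by omega)) (hps n le_rfl)
  have h2 : ∑ i ∈ range (n - 1), (a (i + 1) - a i) * ∑ j ∈ range (i + 1), e j ≤ 0 := by
    apply Finset.sum_nonpos
    intro i hi
    simp only [Finset.mem_range] at hi
    have := hmono i (i+1) (by omega) (by omega)
    exact mul_nonpos_of_nonpos_of_nonneg (by linarith) (hps _ (by omega))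
  rw [H]
  linarith

private lemma exists_ortho {n : ℕ} (r : ℕ) (A : Matrix (Fin n) (Fin n) ℝ) (hA : A.rank ≤ r) :
    ∃ s : ℕ, s ≤ r ∧ ∃ v : Fin s → Fin n → ℝ,
      (∀ j k, (∑ t, v j t * v k t) = if j = k then 1 else 0) ∧
      ∀ x : Fin n → ℝ, (∑ j, (∑ t, v j t * (A *ᵥ x) t) • v j) = A *ᵥ x := by
  classical
  set E := EuclideanSpace ℝ (Fin n)
  set W : Submodule ℝ E := LinearMap.range (Matrix.toEuclideanLin A) with hW
  have hfr : Module.finrank ℝ W = A.rank := by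
    have hmap : W.map (WithLp.linearEquiv 2 ℝ (Fin n → ℝ) : E →ₗ[ℝ] (Fin n → ℝ))
        = LinearMap.range A.mulVecLin := by
      ext y
      simp only [Submodule.mem_map, LinearMap.mem_range, hW]
      constructor
      · rintro ⟨_, ⟨x, rfl⟩, rfl⟩
        exact ⟨(WithLp.equiv 2 _) x, rfl⟩
      · rintro ⟨x, rfl⟩
        exact ⟨Matrix.toEuclideanLin A ((WithLp.equiv 2 _).symm x), ⟨_, rfl⟩, rfl⟩
    rw [Matrix.rank, ← hmap]
    exact (LinearEquiv.finrank_map_eq _ _).symm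
  have hle : Module.finrank ℝ W ≤ r := hfr ▸ hA
  let b := stdOrthonormalBasis ℝ W
  refine ⟨Module.finrank ℝ W, hle, fun j t => ((b j : E) t), ?_, ?_⟩
  · intro j k
    have hb := b.orthonormal
    rw [orthonormal_iff_ite] at hb
    have := hb j k
    rw [Submodule.coe_inner] at this
    rw [PiLp.inner_apply] at this
    simp [RCLike.inner_apply, conj_trivial] at this
    rw [← this]
    exact Finset.sum_congr rfl fun _ _ => mul_comm _ _
  · intro x
    have hmem : (WithLp.equiv 2 (Fin n → ℝ)).symm (A *ᵥ x) ∈ W :=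
      ⟨(WithLp.equiv 2 _).symm x, rfl⟩
    have hsum := b.sum_repr ⟨_, hmem⟩
    have hco : ∀ j, b.repr ⟨_, hmem⟩ j = ∑ t, (b j : E) t * (A *ᵥ x) t := by
      intro j
      rw [b.repr_apply_apply]
      rw [Submodule.coe_inner, PiLp.inner_apply]
      simp [RCLike.inner_apply, conj_trivial, mul_comm]
    set f : W →ₗ[ℝ] (Fin n → ℝ) :=
      (WithLp.linearEquiv 2 ℝ (Fin n → ℝ)).toLinearMap ∘ₗ W.subtype with hf
    have h3 := congrArg f hsum
    rw [map_sum] at h3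
    simp only [_root_.map_smul] at h3
    rw [show (f (⟨_, hmem⟩ : W) : Fin n → ℝ) = A *ᵥ x from rfl] at h3
    refine Eq.trans (Finset.sum_congr rfl fun j _ => ?_) h3
    rw [← hco j]
    rfl

private lemma ortho_quad {s n : ℕ} (v : Fin s → Fin n → ℝ)
    (hv : ∀ j k, (∑ t, v j t * v k t) = if j = k then 1 else 0) (c : Fin s → ℝ) :
    ∑ t, (∑ j, c j * v j t) ^ 2 = ∑ j, c j ^ 2 := by
  calc ∑ t, (∑ j, c j * v j t) ^ 2
      = ∑ j, ∑ k, (c j * c k) * ∑ t, v j t * v k t := by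
        simp_rw [sq, Finset.sum_mul_sum, Finset.mul_sum]
        rw [Finset.sum_comm]
        refine Finset.sum_congr rfl fun j _ => ?_
        rw [Finset.sum_comm]
        exact Finset.sum_congr rfl fun k _ => Finset.sum_congr rfl fun t _ => by ring
    _ = ∑ j, c j ^ 2 := by
        refine Finset.sum_congr rfl fun j _ => ?_
        simp_rw [hv, mul_ite, mul_one, mul_zero]
        simp [sq]

private lemma ortho_inner {s n : ℕ} (v : Fin s → Fin n → ℝ) (w : Fin n → ℝ) (c : Fin s → ℝ) :
    ∑ t, w t * (∑ j, c j * v j t) = ∑ j, c j * ∑ t, v j t * w t := by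
  simp_rw [Finset.mul_sum]
  rw [Finset.sum_comm]
  exact Finset.sum_congr rfl fun j _ => Finset.sum_congr rfl fun t _ => by ring

private lemma pythag {s n : ℕ} (v : Fin s → Fin n → ℝ)
    (hv : ∀ j k, (∑ t, v j t * v k t) = if j = k then 1 else 0) (w : Fin n → ℝ) :
    ∑ t, (w t - ∑ j, (∑ t', v j t' * w t') * v j t) ^ 2
      = ∑ t, w t ^ 2 - ∑ j, (∑ t', v j t' * w t') ^ 2 := by
  have h1 := ortho_quad v hv (fun j => ∑ t', v j t' * w t')
  have h2 := ortho_inner v w (fun j => ∑ t', v j t' * w t')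
  have h3 : ∀ j, (fun j => ∑ t', v j t' * w t') j * (∑ t, v j t * w t)
      = (∑ t', v j t' * w t') ^ 2 := fun j => by simp [sq]
  simp_rw [sub_sq]
  rw [Finset.sum_add_distrib, Finset.sum_sub_distrib]
  rw [h1]
  have h2' : ∑ t, 2 * w t * ∑ j, (∑ t', v j t' * w t') * v j t
      = 2 * ∑ j, (∑ t', v j t' * w t') ^ 2 := by
    simp_rw [mul_assoc, ← Finset.mul_sum]
    congr 1
    rw [h2]
    exact Finset.sum_congr rfl fun j _ => h3 j
  rw [h2']
  ring

private lemma card_filter_lt {n k : ℕ} (hk : k ≤ n) :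
    (Finset.univ.filter (fun i : Fin n => (i : ℕ) < k)).card = k := by
  classical
  rw [Finset.card_filter]
  rw [Fin.sum_univ_eq_sum_range (fun m => if m < k then 1 else 0) n]
  rw [← Finset.card_filter]
  have : (Finset.range n).filter (· < k) = Finset.range k := by
    ext m
    simp only [Finset.mem_filter, Finset.mem_range]
    omega
  rw [this, Finset.card_range]

private lemma key_prefix {n sdim : ℕ} (r : ℕ) (A : Matrix (Fin n) (Fin n) ℝ)
    (v : Fin sdim → Fin n → ℝ) (hs : sdim ≤ r)
    (hv : ∀ j k, (∑ t, v j t * v k t) = if j = k then 1 else 0)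
    (hrec : ∀ x : Fin n → ℝ, (∑ j, (∑ t, v j t * (A *ᵥ x) t) • v j) = A *ᵥ x)
    (u : Fin n → Fin n → ℝ)
    (hU : ∀ s t : Fin n, (∑ i, u i s * u i t) = if s = t then 1 else 0)
    (hu : ∀ i, (∑ t, u i t * u i t) = 1)
    (k : ℕ) (hk : k ≤ n) :
    (k : ℝ) - r ≤ ∑ i ∈ Finset.univ.filter (fun i : Fin n => (i : ℕ) < k),
        (∑ t, (A *ᵥ u i - u i) t ^ 2) := by
  classical
  have step : ∀ i : Fin n,
      1 - ∑ j, (∑ t, v j t * u i t) ^ 2 ≤ ∑ t, (A *ᵥ u i - u i) t ^ 2 := by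
    intro i
    set w := u i with hwdef
    have hrect : ∀ t, ∑ j, (∑ t', v j t' * (A *ᵥ w) t') * v j t = (A *ᵥ w) t := by
      intro t
      have := congrFun (hrec w) t
      simpa [Finset.sum_apply] using this
    have key1 : ∀ t, (A *ᵥ w - w) t - ∑ j, (∑ t', v j t' * (A *ᵥ w - w) t') * v j t
        = -(w t - ∑ j, (∑ t', v j t' * w t') * v j t) := by
      intro t
      simp only [Pi.sub_apply, mul_sub, Finset.sum_sub_distrib, sub_mul]
      rw [hrect t]
      ring
    have hpy_y := pythag v hv (A *ᵥ w - w)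
    have hpy_w := pythag v hv w
    have hw1 : ∑ t, w t ^ 2 = 1 := by
      rw [← hu i]; exact Finset.sum_congr rfl fun t _ => (sq (w t)) ▸ rfl
    calc 1 - ∑ j, (∑ t, v j t * w t) ^ 2
        = ∑ t, w t ^ 2 - ∑ j, (∑ t', v j t' * w t') ^ 2 := by rw [hw1]
      _ = ∑ t, (w t - ∑ j, (∑ t', v j t' * w t') * v j t) ^ 2 := hpy_w.symm
      _ = ∑ t, ((A *ᵥ w - w) t - ∑ j, (∑ t', v j t' * (A *ᵥ w - w) t') * v j t) ^ 2 := by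
          exact Finset.sum_congr rfl fun t _ => by rw [key1 t, neg_sq]
      _ = ∑ t, (A *ᵥ w - w) t ^ 2 - ∑ j, (∑ t', v j t' * (A *ᵥ w - w) t') ^ 2 := hpy_y
      _ ≤ ∑ t, (A *ᵥ w - w) t ^ 2 := by
          have : (0:ℝ) ≤ ∑ j, (∑ t', v j t' * (A *ᵥ w - w) t') ^ 2 :=
            Finset.sum_nonneg fun j _ => sq_nonneg _
          linarith
  have hsum1 : ∑ i ∈ Finset.univ.filter (fun i : Fin n => (i : ℕ) < k),
      (1 - ∑ j, (∑ t, v j t * u i t) ^ 2)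
      ≤ ∑ i ∈ Finset.univ.filter (fun i : Fin n => (i : ℕ) < k),
        (∑ t, (A *ᵥ u i - u i) t ^ 2) :=
    Finset.sum_le_sum fun i _ => step i
  refine le_trans ?_ hsum1
  rw [Finset.sum_sub_distrib]
  rw [Finset.sum_const, card_filter_lt hk, nsmul_eq_mul, mul_one]
  have hparse : ∀ j, ∑ i : Fin n, (∑ t, v j t * u i t) ^ 2 = 1 := by
    intro j
    have := ortho_quad (fun t i => u i t) (fun t t' => hU t t') (v j)
    rw [this]
    have h2 := hv j j
    simp only [if_pos rfl] at h2
    simpa [sq] using h2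
  have hbound : ∑ i ∈ Finset.univ.filter (fun i : Fin n => (i : ℕ) < k),
      (∑ j, (∑ t, v j t * u i t) ^ 2) ≤ (sdim : ℝ) := by
    calc ∑ i ∈ Finset.univ.filter (fun i : Fin n => (i : ℕ) < k),
          (∑ j, (∑ t, v j t * u i t) ^ 2)
        ≤ ∑ i : Fin n, (∑ j, (∑ t, v j t * u i t) ^ 2) := by
          apply Finset.sum_le_sum_of_subset_of_nonneg (Finset.filter_subset _ _)
          intro i _ _
          exact Finset.sum_nonneg fun j _ => sq_nonneg _
      _ = ∑ j, ∑ i : Fin n, (∑ t, v j t * u i t) ^ 2 := Finset.sum_comm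
      _ = ∑ j : Fin sdim, (1:ℝ) := Finset.sum_congr rfl fun j _ => hparse j
      _ = (sdim : ℝ) := by simp
  have hsr : (sdim : ℝ) ≤ (r : ℝ) := Nat.cast_le.mpr hs
  linarith

private lemma integral_quad {Ω : Type} [MeasurableSpace Ω] (μ : Measure Ω)
    [IsProbabilityMeasure μ]
    {n : ℕ} (X : Ω → Fin n → ℝ) (hX : MemLp X 2 μ) (M : Matrix (Fin n) (Fin n) ℝ) :
    ∫ ω, ∑ i, (M *ᵥ X ω) i ^ 2 ∂μ
      = ∑ s, ∑ t, (∑ i, M i s * M i t) * (secondMoment μ X X s t) := by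
  classical
  have hcomp : ∀ s : Fin n, MemLp (fun ω => X ω s) 2 μ := by
    intro s
    have := (ContinuousLinearMap.proj (R := ℝ) (φ := fun _ : Fin n => ℝ) s).comp_memLp' hX
    simpa [Function.comp_def] using this
  have hint : ∀ s t : Fin n, Integrable (fun ω => X ω s * X ω t) μ := by
    intro s t
    have h1 : (1 : ℝ≥0∞) / 1 = 1 / 2 + 1 / 2 := by
      rw [ENNReal.add_halves]; norm_num
    haveI : ENNReal.HolderTriple 2 2 1 := ⟨by rw [ENNReal.inv_two_add_inv_two, inv_one]⟩
    have := MemLp.smul (r := 1) (hcomp t) (hcomp s) (φ := fun ω => X ω s) (f := fun ω => X ω t)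
    rw [← memLp_one_iff_integrable]
    simpa [smul_eq_mul, Pi.mul_def] using this
  have hpt : ∀ ω, ∑ i, (M *ᵥ X ω) i ^ 2
      = ∑ s, ∑ t, (∑ i, M i s * M i t) * (X ω s * X ω t) := by
    intro ω
    have h1 : ∀ i, (M *ᵥ X ω) i ^ 2 = ∑ s, ∑ t, (M i s * M i t) * (X ω s * X ω t) := by
      intro i
      simp only [Matrix.mulVec, dotProduct, sq, Finset.sum_mul_sum]
      exact Finset.sum_congr rfl fun s _ => Finset.sum_congr rfl fun t _ => by ring
    simp_rw [h1]
    rw [Finset.sum_comm]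
    refine Finset.sum_congr rfl fun s _ => ?_
    rw [Finset.sum_comm]
    refine Finset.sum_congr rfl fun t _ => ?_
    rw [Finset.sum_mul]
  simp_rw [hpt]
  rw [integral_finset_sum _ (fun s _ => ?_)]
  · refine Finset.sum_congr rfl fun s _ => ?_
    rw [integral_finset_sum _ (fun t _ => ((hint s t).const_mul _))]
    refine Finset.sum_congr rfl fun t _ => ?_
    rw [integral_const_mul]
    rfl
  · exact integrable_finset_sum _ (fun t _ => ((hint s t).const_mul _))

private lemma gamma_spectral {Ω : Type} [MeasurableSpace Ω] (μ : Measure Ω)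
    {n : ℕ} (X : Ω → Fin n → ℝ) (u : Fin n → Fin n → ℝ) (lam : Fin n → ℝ)
    (hU : ∀ s t : Fin n, (∑ i, u i s * u i t) = if s = t then 1 else 0)
    (heig : ∀ i : Fin n, secondMoment μ X X *ᵥ u i = lam i • u i) :
    ∀ s t : Fin n, secondMoment μ X X s t = ∑ i, lam i * (u i s * u i t) := by
  intro s t
  have h0 : ∑ p, secondMoment μ X X s p * (if p = t then 1 else 0)
      = secondMoment μ X X s t := by simp
  rw [← h0]
  have h1 : ∀ p, (if p = t then (1:ℝ) else 0) = ∑ i, u i p * u i t := fun p => (hU p t).symm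
  simp_rw [h1, Finset.mul_sum]
  rw [Finset.sum_comm]
  refine Finset.sum_congr rfl fun i _ => ?_
  have h2 : ∑ p, secondMoment μ X X s p * (u i p * u i t)
      = ((secondMoment μ X X *ᵥ u i) s) * u i t := by
    simp only [Matrix.mulVec, dotProduct, Finset.sum_mul]
    exact Finset.sum_congr rfl fun p _ => by ring
  rw [h2, heig i]
  simp [mul_assoc, mul_comm]
  ring

private lemma quad_spectral {n : ℕ} (M : Matrix (Fin n) (Fin n) ℝ)
    (u : Fin n → Fin n → ℝ) (lam : Fin n → ℝ) :
    ∑ s, ∑ t, (∑ k, M k s * M k t) * (∑ j, lam j * (u j s * u j t))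
      = ∑ j, lam j * ∑ k, ((M *ᵥ u j) k) ^ 2 := by
  have hL : ∑ s, ∑ t, (∑ k, M k s * M k t) * (∑ j, lam j * (u j s * u j t))
      = ∑ j, ∑ k, ∑ s, ∑ t, lam j * ((M k s * u j s) * (M k t * u j t)) := by
    calc ∑ s, ∑ t, (∑ k, M k s * M k t) * (∑ j, lam j * (u j s * u j t))
        = ∑ s, ∑ t, ∑ j, ∑ k, lam j * ((M k s * u j s) * (M k t * u j t)) := by
          refine Finset.sum_congr rfl fun s _ => Finset.sum_congr rfl fun t _ => ?_
          rw [Finset.sum_mul_sum, Finset.sum_comm]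
          exact Finset.sum_congr rfl fun j _ => Finset.sum_congr rfl fun k _ => by ring
      _ = ∑ s, ∑ j, ∑ t, ∑ k, lam j * ((M k s * u j s) * (M k t * u j t)) := by
          exact Finset.sum_congr rfl fun s _ => Finset.sum_comm
      _ = ∑ j, ∑ s, ∑ t, ∑ k, lam j * ((M k s * u j s) * (M k t * u j t)) :=
          Finset.sum_comm
      _ = ∑ j, ∑ s, ∑ k, ∑ t, lam j * ((M k s * u j s) * (M k t * u j t)) := by
          exact Finset.sum_congr rfl fun j _ => Finset.sum_congr rfl fun s _ => Finset.sum_comm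
      _ = ∑ j, ∑ k, ∑ s, ∑ t, lam j * ((M k s * u j s) * (M k t * u j t)) := by
          exact Finset.sum_congr rfl fun j _ => Finset.sum_comm
  rw [hL]
  refine Finset.sum_congr rfl fun j _ => ?_
  rw [Finset.mul_sum]
  refine Finset.sum_congr rfl fun k _ => ?_
  have h3 : (M *ᵥ u j) k = ∑ s, M k s * u j s := by
    simp [Matrix.mulVec, dotProduct]
  rw [h3, sq, Finset.sum_mul_sum, Finset.mul_sum]
  refine Finset.sum_congr rfl fun s _ => ?_
  rw [Finset.mul_sum]

private lemma fin_sum_to_range {n k : ℕ} (hk : k ≤ n) (g : Fin n → ℝ) :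
    ∑ i ∈ Finset.univ.filter (fun i : Fin n => (i : ℕ) < k), g i
      = ∑ m ∈ Finset.range k, (if h : m < n then g ⟨m, h⟩ else 0) := by
  classical
  rw [Finset.sum_filter]
  have hterm : ∀ i : Fin n, (if (i : ℕ) < k then g i else 0)
      = (fun m => if m < k then (if h : m < n then g ⟨m, h⟩ else 0) else 0) (i : ℕ) := by
    intro i
    by_cases h : (i : ℕ) < k <;> simp [h, i.isLt]
  rw [Finset.sum_congr rfl (fun i _ => hterm i)]
  rw [Fin.sum_univ_eq_sum_range (fun m => if m < k then (if h : m < n then g ⟨m, h⟩ else 0) else 0) n]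
  rw [← Finset.sum_filter]
  have : (Finset.range n).filter (· < k) = Finset.range k := by
    ext m
    simp only [Finset.mem_filter, Finset.mem_range]
    omega
  rw [this]

end Aux

/-- Optimal rank-constrained linear autoencoder (PCA). -/
theorem pca_autoencoder_optimal {Ω : Type} [MeasurableSpace Ω]
    (μ : Measure Ω) [IsProbabilityMeasure μ] {n : ℕ}
    (X : Ω → Fin n → ℝ) (hX : MemLp X 2 μ)
    (u : Fin n → Fin n → ℝ) (lam : Fin n → ℝ)
    (hortho : ∀ i j : Fin n, (∑ t, u i t * u j t) = if i = j then 1 else 0)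
    (heig : ∀ i : Fin n, secondMoment μ X X *ᵥ u i = lam i • u i)
    (hmono : ∀ i j : Fin n, i ≤ j → lam j ≤ lam i)
    (hnonneg : ∀ i : Fin n, 0 ≤ lam i)
    (r : ℕ) (hr : r ≤ n) :
    (∑ i ∈ Finset.univ.filter (fun i : Fin n => (i : ℕ) < r),
        Matrix.vecMulVec (u i) (u i)).rank ≤ r ∧
      ∀ A : Matrix (Fin n) (Fin n) ℝ, A.rank ≤ r →
        ∫ ω, ∑ i, ((∑ i ∈ Finset.univ.filter (fun i : Fin n => (i : ℕ) < r),
              Matrix.vecMulVec (u i) (u i)) *ᵥ X ω - X ω) i ^ 2 ∂μ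
          ≤ ∫ ω, ∑ i, (A *ᵥ X ω - X ω) i ^ 2 ∂μ := by
  classical
  set P : Matrix (Fin n) (Fin n) ℝ :=
    ∑ i ∈ Finset.univ.filter (fun i : Fin n => (i : ℕ) < r),
      Matrix.vecMulVec (u i) (u i) with hP
  -- UᵀU = 1 from UUᵀ = 1
  have hUUt : (Matrix.of u) * (Matrix.of u)ᵀ = 1 := by
    ext i j
    simp only [Matrix.mul_apply, Matrix.transpose_apply, Matrix.of_apply, Matrix.one_apply]
    exact hortho i j
  have hUtU : (Matrix.of u)ᵀ * (Matrix.of u) = 1 := by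
    rw [mul_eq_one_comm] at hUUt
    exact hUUt
  have hU : ∀ s t : Fin n, (∑ i, u i s * u i t) = if s = t then 1 else 0 := by
    intro s t
    have := congrFun (congrFun hUtU s) t
    simpa [Matrix.mul_apply, Matrix.transpose_apply, Matrix.of_apply, Matrix.one_apply]
      using this
  have hu1 : ∀ i, (∑ t, u i t * u i t) = 1 := by
    intro i
    have := hortho i i
    simpa using this
  -- rank part
  have hrank : P.rank ≤ r := by
    set D : Matrix (Fin n) (Fin r) ℝ :=
      Matrix.of fun (s : Fin n) (j : Fin r) => u (Fin.castLE hr j) s with hDdef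
    set E : Matrix (Fin r) (Fin n) ℝ :=
      Matrix.of fun (j : Fin r) (t : Fin n) => u (Fin.castLE hr j) t with hEdef
    have hD : P = D * E := by
      ext s t
      rw [Matrix.mul_apply]
      simp only [hDdef, hEdef, Matrix.of_apply]
      have hL : P s t = ∑ i ∈ Finset.univ.filter (fun i : Fin n => (i : ℕ) < r),
          u i s * u i t := by
        simp [hP, Matrix.sum_apply, Matrix.vecMulVec_apply]
      rw [hL, fin_sum_to_range hr (fun i => u i s * u i t)]
      have hterm : ∀ j : Fin r, u (Fin.castLE hr j) s * u (Fin.castLE hr j) t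
          = (fun m => if h : m < n then u ⟨m, h⟩ s * u ⟨m, h⟩ t else 0) (j : ℕ) := by
        intro j
        simp only [dif_pos (lt_of_lt_of_le j.isLt hr)]
        rfl
      rw [show (∑ j : Fin r, u (Fin.castLE hr j) s * u (Fin.castLE hr j) t)
          = ∑ j : Fin r, (fun m => if h : m < n then u ⟨m, h⟩ s * u ⟨m, h⟩ t else 0) (j : ℕ)
          from Finset.sum_congr rfl fun j _ => hterm j]
      rw [Fin.sum_univ_eq_sum_range (fun m => if h : m < n then u ⟨m, h⟩ s * u ⟨m, h⟩ t else 0) r]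
    calc P.rank = (D * E).rank := by rw [hD]
      _ ≤ D.rank := Matrix.rank_mul_le_left D E
      _ ≤ Fintype.card (Fin r) := Matrix.rank_le_card_width D
      _ = r := Fintype.card_fin r
  refine ⟨hrank, ?_⟩
  intro A hA
  -- reduce both integrals to spectral sums
  have hred : ∀ B : Matrix (Fin n) (Fin n) ℝ,
      ∫ ω, ∑ i, (B *ᵥ X ω - X ω) i ^ 2 ∂μ
        = ∑ j, lam j * ∑ k, (((B - 1) *ᵥ u j)) k ^ 2 := by
    intro B
    have h1 : ∀ ω, ∑ i, (B *ᵥ X ω - X ω) i ^ 2 = ∑ i, ((B - 1) *ᵥ X ω) i ^ 2 := by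
      intro ω
      refine Finset.sum_congr rfl fun i _ => ?_
      rw [Matrix.sub_mulVec, Matrix.one_mulVec]
    calc ∫ ω, ∑ i, (B *ᵥ X ω - X ω) i ^ 2 ∂μ
        = ∫ ω, ∑ i, ((B - 1) *ᵥ X ω) i ^ 2 ∂μ := by
          exact integral_congr_ae (Filter.Eventually.of_forall h1)
      _ = ∑ s, ∑ t, (∑ i, (B - 1) i s * (B - 1) i t) * (secondMoment μ X X s t) :=
          integral_quad μ X hX (B - 1)
      _ = ∑ s, ∑ t, (∑ i, (B - 1) i s * (B - 1) i t) * (∑ j, lam j * (u j s * u j t)) := by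
          refine Finset.sum_congr rfl fun s _ => Finset.sum_congr rfl fun t _ => ?_
          rw [gamma_spectral μ X u lam hU heig s t]
      _ = ∑ j, lam j * ∑ k, (((B - 1) *ᵥ u j)) k ^ 2 := quad_spectral (B - 1) u lam
  rw [hred P, hred A]
  -- compute the P-side coefficients
  have hPapp : ∀ i : Fin n, ((P - 1) *ᵥ u i) = (if (i : ℕ) < r then 0 else -(u i)) := by
    intro i
    have hPu : P *ᵥ u i = (if (i : ℕ) < r then u i else 0) := by
      funext s
      have hc : (P *ᵥ u i) s = ∑ t, (∑ j ∈ Finset.univ.filter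
          (fun j : Fin n => (j : ℕ) < r), u j s * u j t) * u i t := by
        simp [hP, Matrix.mulVec, dotProduct, Matrix.sum_apply, Matrix.vecMulVec_apply]
      rw [hc]
      simp_rw [Finset.sum_mul]
      rw [Finset.sum_comm]
      have : ∀ j, u j s * (∑ t, u j t * u i t) = (if j = i then u j s else 0) := by
        intro j
        rw [hortho j i]
        by_cases h : j = i <;> simp [h]
      calc ∑ j ∈ Finset.univ.filter (fun j : Fin n => (j : ℕ) < r),
            ∑ t, (u j s * u j t) * u i t
          = ∑ j ∈ Finset.univ.filter (fun j : Fin n => (j : ℕ) < r),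
            (if j = i then u j s else 0) := by
            refine Finset.sum_congr rfl fun j _ => ?_
            rw [← this j, Finset.mul_sum]
            exact Finset.sum_congr rfl fun t _ => by ring
        _ = (if (i : ℕ) < r then u i s else 0) := by
            rw [Finset.sum_ite_eq' (Finset.univ.filter (fun j : Fin n => (j : ℕ) < r)) i
              (fun j => u j s)]
            simp [Finset.mem_filter]
        _ = (if (i : ℕ) < r then u i else 0) s := by
            by_cases h : (i : ℕ) < r <;> simp [h]
    rw [Matrix.sub_mulVec, Matrix.one_mulVec, hPu]
    by_cases h : (i : ℕ) < r <;> simp [h]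
  have hcP : ∀ i : Fin n, ∑ k, ((P - 1) *ᵥ u i) k ^ 2 = (if (i : ℕ) < r then 0 else 1) := by
    intro i
    rw [hPapp i]
    by_cases h : (i : ℕ) < r
    · simp [h]
    · simp only [h, if_neg, if_false]
      have : ∑ k, (-(u i)) k ^ 2 = ∑ k, u i k * u i k := by
        refine Finset.sum_congr rfl fun k _ => by simp [sq]
      rw [this, hu1 i]
  simp_rw [hcP]
  -- final Abel-summation comparison
  obtain ⟨sdim, hs, v, hv, hrec⟩ := exists_ortho r A hA
  set cA : Fin n → ℝ := fun i => ∑ k, ((A - 1) *ᵥ u i) k ^ 2 with hcA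
  have hAuw : ∀ i, cA i = ∑ t, ((A *ᵥ u i - u i)) t ^ 2 := by
    intro i
    refine Finset.sum_congr rfl fun t _ => ?_
    rw [Matrix.sub_mulVec, Matrix.one_mulVec]
  -- prefix sums of cA dominate prefix sums of the indicator
  have hprefix : ∀ k : ℕ, k ≤ n →
      ∑ i ∈ Finset.univ.filter (fun i : Fin n => (i : ℕ) < k),
        (if (i : ℕ) < r then (0:ℝ) else 1)
      ≤ ∑ i ∈ Finset.univ.filter (fun i : Fin n => (i : ℕ) < k), cA i := by
    intro k hk
    have hind : ∑ i ∈ Finset.univ.filter (fun i : Fin n => (i : ℕ) < k),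
        (if (i : ℕ) < r then (0:ℝ) else 1) = (k : ℝ) - min k r := by
      rw [fin_sum_to_range hk (fun i => if (i : ℕ) < r then (0:ℝ) else 1)]
      have : ∀ m ∈ Finset.range k, (if h : m < n then
          (if (( ⟨m, h⟩ : Fin n) : ℕ) < r then (0:ℝ) else 1) else 0)
          = (if m < r then (0:ℝ) else 1) := by
        intro m hm
        have hmn : m < n := lt_of_lt_of_le (Finset.mem_range.mp hm) hk
        simp [hmn]
      rw [Finset.sum_congr rfl this]
      rw [Finset.sum_ite]
      simp only [Finset.sum_const, Finset.sum_const_zero, nsmul_eq_mul, mul_one, zero_add]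
      have h1 : ((Finset.range k).filter (fun m => ¬ m < r)).card = k - min k r := by
        have : (Finset.range k).filter (fun m => ¬ m < r)
            = (Finset.range k) \ (Finset.range (min k r)) := by
          ext m
          simp only [Finset.mem_filter, Finset.mem_range, Finset.mem_sdiff]
          omega
        rw [this, Finset.card_sdiff_of_subset (by
          intro m hm
          simp only [Finset.mem_range] at hm ⊢
          omega)]
        simp
      rw [h1]
      have : min k r ≤ k := min_le_left _ _
      push_cast [Nat.cast_sub this]
      ring
    rw [hind]
    by_cases hkr : k ≤ r
    · have : min k r = k := min_eq_left hkr
      rw [this]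
      simp only [sub_self]
      refine Finset.sum_nonneg fun i _ => ?_
      rw [hcA]
      exact Finset.sum_nonneg fun t _ => sq_nonneg _
    · have : min k r = r := min_eq_right (le_of_not_ge hkr)
      rw [this]
      have := key_prefix r A v hs hv hrec u hU hu1 k hk
      calc (k : ℝ) - r ≤ ∑ i ∈ Finset.univ.filter (fun i : Fin n => (i : ℕ) < k),
            (∑ t, (A *ᵥ u i - u i) t ^ 2) := this
        _ = ∑ i ∈ Finset.univ.filter (fun i : Fin n => (i : ℕ) < k), cA i := by
            exact Finset.sum_congr rfl fun i _ => (hAuw i).symm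
  -- apply Abel
  set aa : ℕ → ℝ := fun m => if h : m < n then lam ⟨m, h⟩ else 0 with haa
  set ee : ℕ → ℝ := fun m => if h : m < n then
      (cA ⟨m, h⟩ - (if m < r then 0 else 1)) else 0 with hee
  have habel : 0 ≤ ∑ m ∈ Finset.range n, aa m * ee m := by
    apply abel_nonneg
    · intro i j hij hjn
      simp only [haa, dif_pos hjn, dif_pos (lt_of_le_of_lt hij hjn)]
      exact hmono ⟨i, _⟩ ⟨j, _⟩ hij
    · intro i hin
      simp only [haa, dif_pos hin]
      exact hnonneg _
    · intro k hk
      have := hprefix k hk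
      have heq : ∑ m ∈ Finset.range k, ee m
          = (∑ i ∈ Finset.univ.filter (fun i : Fin n => (i : ℕ) < k), cA i)
            - ∑ i ∈ Finset.univ.filter (fun i : Fin n => (i : ℕ) < k),
              (if (i : ℕ) < r then (0:ℝ) else 1) := by
        rw [← Finset.sum_sub_distrib]
        rw [fin_sum_to_range hk (fun i => cA i - (if (i : ℕ) < r then (0:ℝ) else 1))]
      rw [heq]
      linarith
  have hfinal : ∑ m ∈ Finset.range n, aa m * ee m
      = (∑ j, lam j * cA j) - ∑ j, lam j * (if (j : ℕ) < r then (0:ℝ) else 1) := by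
    rw [← Finset.sum_sub_distrib]
    have : ∀ j : Fin n, lam j * cA j - lam j * (if (j : ℕ) < r then (0:ℝ) else 1)
        = (fun m => aa m * ee m) (j : ℕ) := by
      intro j
      simp only [haa, hee, dif_pos j.isLt, Fin.eta]
      ring
    rw [Finset.sum_congr rfl (fun j _ => this j)]
    exact (Fin.sum_univ_eq_sum_range (fun m => aa m * ee m) n).symm
  rw [hfinal] at habel
  linarith
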